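/- Applying Algorithm 1 to P1 = P_{K,r} (for r ∈ [K−1]) and P2 the 1×Q array (1,2,…,Q) viewed as a (Q,1,0,Q) PDA yields a (KQ, C(K,r), C(K−1,r−1), Q·C(K,r+1)) PDA. -/

import Mathlib

def IsPDA {ι κ : Type*} [Fintype ι] (Z S : ℕ) (P : ι → κ → Option ℕ) : Prop :=
  (∀ k : κ, (Finset.univ.filter (fun f : ι => P f k = none)).card = Z) ∧
  (∀ f k s, P f k = some s → s ∈ Finset.Icc 1 S) ∧
  (∀ s ∈ Finset.Icc 1 S, ∃ f k, P f k = some s) ∧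
  (∀ f₁ k₁ f₂ k₂ s, (f₁, k₁) ≠ (f₂, k₂) →
      P f₁ k₁ = some s → P f₂ k₂ = some s →
      f₁ ≠ f₂ ∧ k₁ ≠ k₂ ∧ P f₁ k₂ = none ∧ P f₂ k₁ = none)

def extendPDA {ι1 κ1 ι2 κ2 : Type*} (S2 : ℕ)
    (P1 : ι1 → κ1 → Option ℕ) (P2 : ι2 → κ2 → Option ℕ) :
    ι1 × ι2 → κ1 × κ2 → Option ℕ :=
  fun f k =>
    match P1 f.1 k.1 with
    | none => none
    | some s => (P2 f.2 k.2).map (fun v => v + (s - 1) * S2)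

def PDT (D t : ℕ) (y : {T' : Finset (Fin D) // T'.card = t + 1} → ℕ) :
    {T : Finset (Fin D) // T.card = t} → Fin D → Option ℕ :=
  fun T d =>
    if hd : d ∈ T.1 then none
    else some (y ⟨insert d T.1, by
      rw [Finset.card_insert_of_notMem hd, T.2]⟩)

def rowPDA (Q : ℕ) : Fin 1 → Fin Q → Option ℕ := fun _ q => some (q.1 + 1)

lemma extend_eval_none {K Q r : ℕ} (y : {T' : Finset (Fin K) // T'.card = r + 1} → ℕ)
    (f : {T : Finset (Fin K) // T.card = r} × Fin 1) (k : Fin K × Fin Q) :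
    extendPDA Q (PDT K r y) (rowPDA Q) f k = none ↔ k.1 ∈ f.1.1 := by
  by_cases hd : k.1 ∈ f.1.1 <;> simp [extendPDA, PDT, rowPDA, hd]

lemma extend_eval_some {K Q r : ℕ} (y : {T' : Finset (Fin K) // T'.card = r + 1} → ℕ)
    (f : {T : Finset (Fin K) // T.card = r} × Fin 1) (k : Fin K × Fin Q) (s : ℕ) :
    extendPDA Q (PDT K r y) (rowPDA Q) f k = some s ↔
      k.1 ∉ f.1.1 ∧ ∃ A : {T' : Finset (Fin K) // T'.card = r + 1},
        A.1 = insert k.1 f.1.1 ∧ s = k.2.1 + 1 + (y A - 1) * Q := by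
  by_cases hd : k.1 ∈ f.1.1
  · simp [extendPDA, PDT, rowPDA, hd]
  · simp only [extendPDA, PDT, rowPDA, hd, dif_neg, not_false_iff, Option.map_some,
      Option.some.injEq, true_and]
    constructor
    · intro h
      exact ⟨⟨insert k.1 f.1.1, by rw [Finset.card_insert_of_notMem hd, f.1.2]⟩, rfl, h.symm⟩
    · rintro ⟨A, hA, hs⟩
      have : A = ⟨insert k.1 f.1.1, by rw [Finset.card_insert_of_notMem hd, f.1.2]⟩ :=
        Subtype.ext hA
      rw [this] at hs
      exact hs.symm

lemma star_count (K r : ℕ) (hr : 1 ≤ r) (d : Fin K) :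
    (Finset.univ.filter
      (fun f : {T : Finset (Fin K) // T.card = r} × Fin 1 => d ∈ f.1.1)).card
      = (K - 1).choose (r - 1) := by
  have h : ((Finset.univ.erase d).powersetCard (r-1)).card = (K-1).choose (r-1) := by
    rw [Finset.card_powersetCard, Finset.card_erase_of_mem (Finset.mem_univ d),
      Finset.card_univ, Fintype.card_fin]
  rw [← h]
  apply Finset.card_bij (fun f _ => f.1.1.erase d)
  · intro f hf
    simp only [Finset.mem_filter] at hf
    rw [Finset.mem_powersetCard]
    exact ⟨Finset.erase_subset_erase d (Finset.subset_univ _),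
      by rw [Finset.card_erase_of_mem hf.2, f.1.2]⟩
  · intro f1 h1 f2 h2 he
    simp only [Finset.mem_filter] at h1 h2
    have : f1.1.1 = f2.1.1 := by
      rw [← Finset.insert_erase h1.2, ← Finset.insert_erase h2.2, he]
    exact Prod.ext (Subtype.ext this) (Subsingleton.elim _ _)
  · intro S hS
    rw [Finset.mem_powersetCard] at hS
    have hd : d ∉ S := fun h => (Finset.notMem_erase d _) (hS.1 h)
    refine ⟨(⟨insert d S, ?_⟩, 0), ?_, ?_⟩
    · rw [Finset.card_insert_of_notMem hd, hS.2]; omega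
    · simp [Finset.mem_insert]
    · simp [Finset.erase_insert hd]

theorem extend_PDT_row_isPDA (K Q r : ℕ) (hQ : 1 ≤ Q)
    (hr : 1 ≤ r) (hrK : r ≤ K - 1)
    (y : {T' : Finset (Fin K) // T'.card = r + 1} → ℕ)
    (hy_inj : Function.Injective y)
    (hy_range : Set.range y = Set.Icc 1 (K.choose (r + 1))) :
    IsPDA ((K - 1).choose (r - 1)) (Q * K.choose (r + 1))
      (extendPDA Q (PDT K r y) (rowPDA Q)) := by
  have hK : r + 1 ≤ K := by omega
  have hC : 1 ≤ K.choose (r + 1) := Nat.choose_pos hK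
  have hy_mem : ∀ A, 1 ≤ y A ∧ y A ≤ K.choose (r + 1) := fun A => by
    have : y A ∈ Set.Icc 1 (K.choose (r + 1)) := hy_range ▸ Set.mem_range_self A
    exact this
  refine ⟨?_, ?_, ?_, ?_⟩
  · -- A1: star count
    rintro ⟨d, q⟩
    rw [← star_count K r hr d]
    congr 1
    apply Finset.filter_congr
    intro f _
    exact extend_eval_none y f (d, q)
  · -- A2: integer bounds
    rintro f k s hs
    rw [extend_eval_some] at hs
    obtain ⟨-, A, -, rfl⟩ := hs
    obtain ⟨h1, h2⟩ := hy_mem A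
    have hq : k.2.1 < Q := k.2.2
    have e1 : (y A - 1) * Q ≤ (K.choose (r + 1) - 1) * Q :=
      Nat.mul_le_mul_right _ (by omega)
    have e2 : (K.choose (r + 1) - 1) * Q = K.choose (r + 1) * Q - Q := Nat.sub_one_mul _ _
    have e3 : Q ≤ K.choose (r + 1) * Q := Nat.le_mul_of_pos_left Q hC
    have e4 : Q * K.choose (r + 1) = K.choose (r + 1) * Q := Nat.mul_comm _ _
    rw [Finset.mem_Icc]
    omega
  · -- A3: surjectivity onto [S]
    intro s hs
    rw [Finset.mem_Icc] at hs
    have hQC : Q * K.choose (r + 1) = K.choose (r + 1) * Q := Nat.mul_comm _ _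
    obtain ⟨m, p, hp, hsum, hmlt⟩ :
        ∃ m p, p < Q ∧ p + m * Q = s - 1 ∧ m < K.choose (r + 1) := by
      refine ⟨(s - 1) / Q, (s - 1) % Q, Nat.mod_lt _ (by omega),
        Nat.mod_add_div' _ _, ?_⟩
      rw [Nat.div_lt_iff_lt_mul (by omega)]
      omega
    have hmem : m + 1 ∈ Set.Icc 1 (K.choose (r + 1)) := ⟨by omega, by omega⟩
    rw [← hy_range] at hmem
    obtain ⟨A, hA⟩ := hmem
    have hAne : A.1.Nonempty := Finset.card_pos.mp (by rw [A.2]; omega)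
    obtain ⟨d, hd⟩ := hAne
    refine ⟨(⟨A.1.erase d, by rw [Finset.card_erase_of_mem hd, A.2]; omega⟩, 0),
      (d, ⟨p, hp⟩), ?_⟩
    rw [extend_eval_some]
    refine ⟨Finset.notMem_erase d A.1, A, (Finset.insert_erase hd).symm, ?_⟩
    rw [hA, Nat.add_sub_cancel]
    simp only []
    omega
  · -- A4: collision structure
    rintro ⟨T1, i1⟩ ⟨d1, q1⟩ ⟨T2, i2⟩ ⟨d2, q2⟩ s hne h1 h2
    rw [extend_eval_some] at h1 h2
    obtain ⟨hd1, A1, hA1, hs1⟩ := h1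
    obtain ⟨hd2, A2, hA2, hs2⟩ := h2
    simp only [] at hd1 hd2 hA1 hA2 hs1 hs2
    obtain ⟨ha1, ha1'⟩ := hy_mem A1
    obtain ⟨ha2, ha2'⟩ := hy_mem A2
    have hq1 : q1.1 < Q := q1.2
    have hq2 : q2.1 < Q := q2.2
    -- q1 = q2 and y A1 = y A2
    have heq : q1.1 + (y A1 - 1) * Q = q2.1 + (y A2 - 1) * Q := by omega
    have hqq : q1.1 = q2.1 := by
      have := congrArg (· % Q) heq
      simpa [Nat.add_mul_mod_self_right, Nat.mod_eq_of_lt hq1, Nat.mod_eq_of_lt hq2] using this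
    have hyy : y A1 = y A2 := by
      have hm : (y A1 - 1) * Q = (y A2 - 1) * Q := by omega
      have := Nat.eq_of_mul_eq_mul_right (by omega : 0 < Q) hm
      omega
    have hAA : A1 = A2 := hy_inj hyy
    have hins : insert d1 T1.1 = insert d2 T2.1 := by rw [← hA1, hAA, hA2]
    have hTT : T1.1 ≠ T2.1 := by
      intro hT
      have hdd : d1 = d2 := by
        have hmem : d1 ∈ insert d2 T2.1 := by
          rw [← hins]; exact Finset.mem_insert_self _ _
        rcases Finset.mem_insert.mp hmem with h | h
        · exact h
        · exact absurd (hT ▸ h) hd1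
      exact hne (by
        simp only [Prod.mk.injEq]
        exact ⟨⟨Subtype.ext hT, Subsingleton.elim _ _⟩, hdd, Fin.ext hqq⟩)
    have hdd : d1 ≠ d2 := by
      intro h
      apply hTT
      have e1 : (insert d1 T1.1).erase d1 = T1.1 := Finset.erase_insert hd1
      have e2 : (insert d2 T2.1).erase d1 = T2.1 := by
        rw [← h] at hd2 ⊢
        exact Finset.erase_insert hd2
      rw [← e1, ← e2, hins]
    refine ⟨fun h => hTT (congrArg (fun x => x.1.1) h),
      fun h => hdd (congrArg Prod.fst h), ?_, ?_⟩
    · rw [extend_eval_none]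
      have : d2 ∈ insert d1 T1.1 := by rw [hins]; exact Finset.mem_insert_self _ _
      rcases Finset.mem_insert.mp this with h | h
      · exact absurd h.symm hdd
      · exact h
    · rw [extend_eval_none]
      have : d1 ∈ insert d2 T2.1 := by rw [← hins]; exact Finset.mem_insert_self _ _
      rcases Finset.mem_insert.mp this with h | h
      · exact absurd h hdd
      · exact h
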